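/- Let g1 and g2 be centers of two horizontally or vertically adjacent grid cells of side length c = √15/10 in a unit-disk graph G on V ⊆ ℝ², and let u, v ∈ V be the representatives of g1, g2 respectively. Then hop_G(u, v) ≤ 3. -/
import Mathlib

set_option maxHeartbeats 4000000

noncomputable section


private lemma distsq (x y : EuclideanSpace ℝ (Fin 2)) :
    dist x y ^ 2 = (x 0 - y 0)^2 + (x 1 - y 1)^2 := by
  rw [EuclideanSpace.dist_eq, Real.sq_sqrt (by positivity)]
  simp [Fin.sum_univ_two, Real.dist_eq, sq_abs]

private lemma lemB (z p q y : EuclideanSpace ℝ (Fin 2)) (hy : y ∈ segment ℝ p q) :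
    ∃ e ∈ ({p, q} : Set (EuclideanSpace ℝ (Fin 2))),
      dist z e ^ 2 ≤ dist z y ^ 2 + dist p q ^ 2 / 4 := by
  rw [segment_eq_image'] at hy
  obtain ⟨t, ⟨ht0, ht1⟩, rfl⟩ := hy
  have happ : ∀ i, (p + t • (q - p)) i = p i + t * (q i - p i) := by
    intro i
    simp [PiLp.add_apply, PiLp.smul_apply, PiLp.sub_apply, smul_eq_mul]
  rcases le_total (dist z p ^ 2) (dist z q ^ 2) with h | h
  · refine ⟨p, by simp, ?_⟩
    rw [distsq, distsq, distsq] at *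
    simp only []
    rw [happ 0, happ 1]
    nlinarith [mul_nonneg ht0 (sub_nonneg.2 h),
      mul_nonneg (by positivity : (0:ℝ) ≤ (q 0 - p 0)^2 + (q 1 - p 1)^2) (sq_nonneg (2*t - 1))]
  · refine ⟨q, by simp, ?_⟩
    rw [distsq, distsq, distsq] at *
    simp only []
    rw [happ 0, happ 1]
    nlinarith [mul_nonneg (by linarith : (0:ℝ) ≤ 1 - t) (sub_nonneg.2 h),
      mul_nonneg (by positivity : (0:ℝ) ≤ (q 0 - p 0)^2 + (q 1 - p 1)^2) (sq_nonneg (2*t - 1))]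


private lemma lemT (p₁ p₂ p₃ z y : EuclideanSpace ℝ (Fin 2))
    (h12 : dist p₁ p₂ ≤ 1) (h13 : dist p₁ p₃ ≤ 1) (h23 : dist p₂ p₃ ≤ 1)
    (hy : y ∈ convexHull ℝ ({p₁, p₂, p₃} : Set (EuclideanSpace ℝ (Fin 2)))) :
    ∃ e ∈ ({p₁, p₂, p₃} : Set (EuclideanSpace ℝ (Fin 2))),
      dist z e ^ 2 ≤ dist z y ^ 2 + 1/3 := by
  rw [show ({p₁,p₂,p₃} : Set (EuclideanSpace ℝ (Fin 2))) = insert p₁ {p₂, p₃} from rfl,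
      convexHull_insert (by simp), convexHull_pair, mem_convexJoin] at hy
  obtain ⟨x', hx', m, hm, hym⟩ := hy
  rw [Set.mem_singleton_iff] at hx'
  rw [hx'] at hym
  clear hx' x'
  rw [segment_eq_image'] at hm hym
  obtain ⟨σ, ⟨hσ0, hσ1⟩, rfl⟩ := hm
  obtain ⟨θ, ⟨hθ0, hθ1⟩, rfl⟩ := hym
  simp only []
  have h12' : dist p₁ p₂ ^ 2 ≤ 1 := by nlinarith [dist_nonneg (x := p₁) (y := p₂)]
  have h13' : dist p₁ p₃ ^ 2 ≤ 1 := by nlinarith [dist_nonneg (x := p₁) (y := p₃)]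
  have h23' : dist p₂ p₃ ^ 2 ≤ 1 := by nlinarith [dist_nonneg (x := p₂) (y := p₃)]
  rw [distsq] at h12' h13' h23'
  have happ : ∀ i, ((p₁ + θ • ((fun θ' : ℝ => p₂ + θ' • (p₃ - p₂)) σ - p₁)) : EuclideanSpace ℝ (Fin 2)) i
      = p₁ i + θ * ((p₂ i + σ * (p₃ i - p₂ i)) - p₁ i) := by
    intro i
    simp [PiLp.add_apply, PiLp.smul_apply, PiLp.sub_apply, smul_eq_mul]
  have hl1 : (0:ℝ) ≤ 1 - θ := by linarith
  have hl2 : (0:ℝ) ≤ θ * (1 - σ) := by nlinarith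
  have hl3 : (0:ℝ) ≤ θ * σ := by nlinarith
  rcases le_total (dist z p₁ ^ 2) (dist z p₂ ^ 2) with hm12 | hm12
  · rcases le_total (dist z p₁ ^ 2) (dist z p₃ ^ 2) with hm13 | hm13
    · refine ⟨p₁, by simp, ?_⟩
      simp only [distsq] at hm12 hm13 ⊢
      rw [happ 0, happ 1]
      nlinarith [mul_nonneg hl2 (sub_nonneg.2 hm12), mul_nonneg hl3 (sub_nonneg.2 hm13),
        mul_nonneg (mul_nonneg hl1 hl2) (sub_nonneg.2 h12'),
        mul_nonneg (mul_nonneg hl1 hl3) (sub_nonneg.2 h13'),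
        mul_nonneg (mul_nonneg hl2 hl3) (sub_nonneg.2 h23'),
        sq_nonneg ((1-θ) - θ*(1-σ)), sq_nonneg ((1-θ) - θ*σ), sq_nonneg (θ*(1-σ) - θ*σ)]
    · refine ⟨p₃, by simp, ?_⟩
      simp only [distsq] at hm12 hm13 ⊢
      rw [happ 0, happ 1]
      nlinarith [mul_nonneg hl2 (sub_nonneg.2 (le_trans hm13 hm12)),
        mul_nonneg hl1 (sub_nonneg.2 hm13),
        mul_nonneg (mul_nonneg hl1 hl2) (sub_nonneg.2 h12'),
        mul_nonneg (mul_nonneg hl1 hl3) (sub_nonneg.2 h13'),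
        mul_nonneg (mul_nonneg hl2 hl3) (sub_nonneg.2 h23'),
        sq_nonneg ((1-θ) - θ*(1-σ)), sq_nonneg ((1-θ) - θ*σ), sq_nonneg (θ*(1-σ) - θ*σ)]
  · rcases le_total (dist z p₂ ^ 2) (dist z p₃ ^ 2) with hm23 | hm23
    · refine ⟨p₂, by simp, ?_⟩
      simp only [distsq] at hm12 hm23 ⊢
      rw [happ 0, happ 1]
      nlinarith [mul_nonneg hl1 (sub_nonneg.2 hm12), mul_nonneg hl3 (sub_nonneg.2 hm23),
        mul_nonneg (mul_nonneg hl1 hl2) (sub_nonneg.2 h12'),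
        mul_nonneg (mul_nonneg hl1 hl3) (sub_nonneg.2 h13'),
        mul_nonneg (mul_nonneg hl2 hl3) (sub_nonneg.2 h23'),
        sq_nonneg ((1-θ) - θ*(1-σ)), sq_nonneg ((1-θ) - θ*σ), sq_nonneg (θ*(1-σ) - θ*σ)]
    · refine ⟨p₃, by simp, ?_⟩
      simp only [distsq] at hm12 hm23 ⊢
      rw [happ 0, happ 1]
      nlinarith [mul_nonneg hl1 (sub_nonneg.2 (le_trans hm23 hm12)),
        mul_nonneg hl2 (sub_nonneg.2 hm23),
        mul_nonneg (mul_nonneg hl1 hl2) (sub_nonneg.2 h12'),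
        mul_nonneg (mul_nonneg hl1 hl3) (sub_nonneg.2 h13'),
        mul_nonneg (mul_nonneg hl2 hl3) (sub_nonneg.2 h23'),
        sq_nonneg ((1-θ) - θ*(1-σ)), sq_nonneg ((1-θ) - θ*σ), sq_nonneg (θ*(1-σ) - θ*σ)]


private lemma stat (A B ε₀ : ℝ) (hB : 0 ≤ B) (hε₀ : 0 < ε₀)
    (h : ∀ x : ℝ, |x| ≤ ε₀ → 0 ≤ 2*x*A + x^2*B) : A = 0 := by
  by_contra hA
  have habs : 0 < |A| := abs_pos.mpr hA
  set ε := min ε₀ (|A|/(B+1)) with hε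
  have hεpos : 0 < ε := lt_min hε₀ (by positivity)
  have hεle : ε * (B+1) ≤ |A| := by
    rw [← le_div_iff₀ (by positivity)]; exact min_le_right _ _
  have h2 : ε^2*B ≤ ε*|A| := by nlinarith
  rcases le_or_gt A 0 with hA' | hA'
  · have hh := h ε (by rw [abs_of_pos hεpos]; exact min_le_left _ _)
    have : |A| = -A := abs_of_nonpos hA'
    nlinarith
  · have hh := h (-ε) (by rw [abs_neg, abs_of_pos hεpos]; exact min_le_left _ _)
    have : |A| = A := abs_of_pos hA'
    nlinarith

private lemma core' (P Q N : ℝ) (hN : 0 < N) (hP : 0 ≤ P) (hQ : 0 ≤ Q)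
    (h1 : 1/4 < P^2*N) (h2 : 1/4 < Q^2*N) (hb : (P+Q)^2*N ≤ 1) : False := by
  have hPQ2 : 1/16 < (P*Q*N)^2 := by nlinarith
  have hPQ : 1/4 < P*Q*N := by nlinarith [mul_nonneg (mul_nonneg hP hQ) hN.le]
  nlinarith

private lemma claim (x0 x1 y0 y1 N : ℝ) (hN : 0 < N)
    (hx0 : x0 ≤ 0) (hx1 : 0 ≤ x1) (hy0 : y0 ≤ 0) (hy1 : 0 ≤ y1)
    (hbx : (x1 - x0)^2 * N ≤ 1) (hby : (y1 - y0)^2 * N ≤ 1) :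
    ∃ x' ∈ ({x0, x1} : Set ℝ), ∃ y' ∈ ({y0, y1} : Set ℝ), (x' - y')^2 * N ≤ 1/4 := by
  by_contra hcon
  push_neg at hcon
  have c00 := hcon x0 (by simp) y0 (by simp)
  have c01 := hcon x0 (by simp) y1 (by simp)
  have c10 := hcon x1 (by simp) y0 (by simp)
  have c11 := hcon x1 (by simp) y1 (by simp)
  rcases le_total x1 y1 with h | h
  · exact core' (y1 - x1) (x1 - y0) N hN (by linarith) (by linarith)
      (by nlinarith) (by nlinarith) (by nlinarith)
  · exact core' (x1 - y1) (y1 - x0) N hN (by linarith) (by linarith)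
      (by nlinarith) (by nlinarith) (by nlinarith)

private lemma claim' (x0 x1 y0 y1 N : ℝ) (hN : 0 < N)
    (hx : x0 * x1 ≤ 0) (hy : y0 * y1 ≤ 0)
    (hbx : (x1 - x0)^2 * N ≤ 1) (hby : (y1 - y0)^2 * N ≤ 1) :
    ∃ x' ∈ ({x0, x1} : Set ℝ), ∃ y' ∈ ({y0, y1} : Set ℝ), (x' - y')^2 * N ≤ 1/4 := by
  rcases mul_nonpos_iff.mp hx with ⟨ha1, ha2⟩ | ⟨ha1, ha2⟩ <;>
    rcases mul_nonpos_iff.mp hy with ⟨hb1, hb2⟩ | ⟨hb1, hb2⟩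
  · obtain ⟨x', hx', y', hy', hf⟩ := claim x1 x0 y1 y0 N hN ha2 ha1 hb2 hb1
      (by rw [show (x0 - x1)^2 = (x1 - x0)^2 by ring]; exact hbx)
      (by rw [show (y0 - y1)^2 = (y1 - y0)^2 by ring]; exact hby)
    exact ⟨x', Set.pair_comm x1 x0 ▸ hx', y', Set.pair_comm y1 y0 ▸ hy', hf⟩
  · obtain ⟨x', hx', y', hy', hf⟩ := claim x1 x0 y0 y1 N hN ha2 ha1 hb1 hb2
      (by rw [show (x0 - x1)^2 = (x1 - x0)^2 by ring]; exact hbx) hby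
    exact ⟨x', Set.pair_comm x1 x0 ▸ hx', y', hy', hf⟩
  · obtain ⟨x', hx', y', hy', hf⟩ := claim x0 x1 y1 y0 N hN ha1 ha2 hb2 hb1 hbx
      (by rw [show (y0 - y1)^2 = (y1 - y0)^2 by ring]; exact hby)
    exact ⟨x', hx', y', Set.pair_comm y1 y0 ▸ hy', hf⟩
  · exact claim x0 x1 y0 y1 N hN ha1 ha2 hb1 hb2 hbx hby

private lemma crossbd (x y u0 u1 w0 w1 : ℝ) (hx : x^2 ≤ 1/4) (hy : y^2 ≤ 1/4)
    (hU : u0^2+u1^2 ≤ 1) (hW : w0^2+w1^2 ≤ 1) :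
    (x*u0 - y*w0)^2 + (x*u1 - y*w1)^2 ≤ 1 := by
  have hG : (u0*w0+u1*w1)^2 ≤ 1 := by nlinarith [sq_nonneg (u0*w1 - u1*w0)]
  have h1 : (x*y*(u0*w0+u1*w1))^2 ≤ 1/16 := by nlinarith [sq_nonneg (x*y), sq_nonneg (u0*w0+u1*w1)]
  have h2 : -2*(x*y*(u0*w0+u1*w1)) ≤ 1/2 := by nlinarith [sq_nonneg (x*y*(u0*w0+u1*w1) + 1/4)]
  have h3 : x^2*(u0^2+u1^2) ≤ 1/4 := by nlinarith [sq_nonneg x, sq_nonneg u0, sq_nonneg u1]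
  have h4 : y^2*(w0^2+w1^2) ≤ 1/4 := by nlinarith [sq_nonneg y, sq_nonneg w0, sq_nonneg w1]
  nlinarith

/-- scalar min-of-two lemma along a segment -/
private lemma lemBs (e0 e1 f0 f1 w0 w1 t : ℝ) (ht0 : 0 ≤ t) (ht1 : t ≤ 1) :
    ∃ b : ℝ, (b = 0 ∨ b = 1) ∧
      (e0 - (f0 + b*w0))^2 + (e1 - (f1 + b*w1))^2
        ≤ (e0 - (f0 + t*w0))^2 + (e1 - (f1 + t*w1))^2 + (w0^2 + w1^2)/4 := by
  rcases le_total ((e0 - (f0 + 0*w0))^2 + (e1 - (f1 + 0*w1))^2)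
      ((e0 - (f0 + 1*w0))^2 + (e1 - (f1 + 1*w1))^2) with h | h
  · refine ⟨0, Or.inl rfl, ?_⟩
    nlinarith [mul_nonneg ht0 (sub_nonneg.2 h),
      mul_nonneg (by positivity : (0:ℝ) ≤ w0^2 + w1^2) (sq_nonneg (2*t - 1))]
  · refine ⟨1, Or.inr rfl, ?_⟩
    nlinarith [mul_nonneg (by linarith : (0:ℝ) ≤ 1 - t) (sub_nonneg.2 h),
      mul_nonneg (by positivity : (0:ℝ) ≤ w0^2 + w1^2) (sq_nonneg (2*t - 1))]

/-- scalar core of the two-segment endpoint lemma -/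
private lemma lemAcore (a0 a1 b0 b1 u0 u1 w0 w1 s1 t1 : ℝ)
    (hU : u0^2 + u1^2 ≤ 1) (hW : w0^2 + w1^2 ≤ 1)
    (hs10 : 0 ≤ s1) (hs11 : s1 ≤ 1) (ht10 : 0 ≤ t1) (ht11 : t1 ≤ 1)
    (hd : ((a0 + s1*u0) - (b0 + t1*w0))^2 + ((a1 + s1*u1) - (b1 + t1*w1))^2 ≤ 3/4) :
    ∃ s t : ℝ, (s = 0 ∨ s = 1) ∧ (t = 0 ∨ t = 1) ∧
      ((a0 + s*u0) - (b0 + t*w0))^2 + ((a1 + s*u1) - (b1 + t*w1))^2 ≤ 1 := by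
  set F : ℝ × ℝ → ℝ := fun st =>
    ((a0 + st.1*u0) - (b0 + st.2*w0))^2 + ((a1 + st.1*u1) - (b1 + st.2*w1))^2 with hF
  have hcont : ContinuousOn F (Set.Icc ((0:ℝ),(0:ℝ)) (1,1)) := by fun_prop
  obtain ⟨⟨s₀, t₀⟩, hmem, hmin⟩ :=
    (isCompact_Icc (a := ((0:ℝ),(0:ℝ))) (b := (1,1))).exists_isMinOn
      ⟨((0:ℝ),(0:ℝ)), by simp⟩ hcont
  simp only [Set.mem_Icc, Prod.mk_le_mk] at hmem
  obtain ⟨⟨hs00, ht00⟩, hs01, ht01⟩ := hmem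
  have hmin' : ∀ s t : ℝ, 0 ≤ s → s ≤ 1 → 0 ≤ t → t ≤ 1 → F (s₀, t₀) ≤ F (s, t) := by
    intro s t h1 h2 h3 h4
    exact isMinOn_iff.mp hmin (s, t)
      (by simp only [Set.mem_Icc, Prod.mk_le_mk]; exact ⟨⟨h1, h3⟩, h2, h4⟩)
  have hF34 : F (s₀, t₀) ≤ 3/4 := le_trans (hmin' s1 t1 hs10 hs11 ht10 ht11) hd
  rcases eq_or_lt_of_le hs00 with hs0 | hs0
  · -- s₀ = 0
    obtain ⟨b, hb, hineq⟩ := lemBs a0 a1 b0 b1 w0 w1 t₀ ht00 ht01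
    refine ⟨0, b, Or.inl rfl, hb, ?_⟩
    have h34 : ((a0 + 0*u0) - (b0 + t₀*w0))^2 + ((a1 + 0*u1) - (b1 + t₀*w1))^2 ≤ 3/4 := by
      have : F (0, t₀) ≤ 3/4 := by rw [← hs0] at hF34; exact hF34
      simpa [hF] using this
    nlinarith [hineq]
  rcases eq_or_lt_of_le hs01 with hs1 | hs1
  · -- s₀ = 1
    obtain ⟨b, hb, hineq⟩ := lemBs (a0 + u0) (a1 + u1) b0 b1 w0 w1 t₀ ht00 ht01
    refine ⟨1, b, Or.inr rfl, hb, ?_⟩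
    have h34 : ((a0 + 1*u0) - (b0 + t₀*w0))^2 + ((a1 + 1*u1) - (b1 + t₀*w1))^2 ≤ 3/4 := by
      have : F (1, t₀) ≤ 3/4 := by rw [hs1] at hF34; exact hF34
      simpa [hF] using this
    nlinarith [hineq]
  rcases eq_or_lt_of_le ht00 with ht0 | ht0
  · -- t₀ = 0
    obtain ⟨b, hb, hineq⟩ := lemBs b0 b1 a0 a1 u0 u1 s₀ hs00 hs01
    refine ⟨b, 0, hb, Or.inl rfl, ?_⟩
    have h34 : ((a0 + s₀*u0) - (b0 + 0*w0))^2 + ((a1 + s₀*u1) - (b1 + 0*w1))^2 ≤ 3/4 := by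
      have : F (s₀, 0) ≤ 3/4 := by rw [← ht0] at hF34; exact hF34
      simpa [hF] using this
    nlinarith [hineq, hU]
  rcases eq_or_lt_of_le ht01 with ht1 | ht1
  · -- t₀ = 1
    obtain ⟨b, hb, hineq⟩ := lemBs (b0 + w0) (b1 + w1) a0 a1 u0 u1 s₀ hs00 hs01
    refine ⟨b, 1, hb, Or.inr rfl, ?_⟩
    have h34 : ((a0 + s₀*u0) - (b0 + 1*w0))^2 + ((a1 + s₀*u1) - (b1 + 1*w1))^2 ≤ 3/4 := by
      have : F (s₀, 1) ≤ 3/4 := by rw [ht1] at hF34; exact hF34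
      simpa [hF] using this
    nlinarith [hineq, hU]
  -- interior case
  obtain ⟨d0, hd0⟩ : ∃ r : ℝ, ((a0 + s₀*u0) - (b0 + t₀*w0)) = r := ⟨_, rfl⟩
  obtain ⟨d1, hd1⟩ : ∃ r : ℝ, ((a1 + s₀*u1) - (b1 + t₀*w1)) = r := ⟨_, rfl⟩
  have hN34 : d0^2 + d1^2 ≤ 3/4 := by
    have : F (s₀, t₀) ≤ 3/4 := hF34
    rw [hF] at this
    simp only [] at this
    rw [hd0, hd1] at this
    exact this
  have hA1 : d0*u0 + d1*u1 = 0 := by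
    apply stat _ (u0^2 + u1^2) (min s₀ (1 - s₀)) (by positivity)
      (lt_min hs0 (by linarith))
    intro x hx
    obtain ⟨hxl, hxr⟩ := abs_le.mp hx
    have hl := min_le_left s₀ (1 - s₀)
    have hr := min_le_right s₀ (1 - s₀)
    have hm := hmin' (s₀ + x) t₀ (by linarith) (by linarith) ht00 ht01
    rw [hF] at hm
    simp only [] at hm
    have k0 : (a0 + (s₀ + x)*u0) - (b0 + t₀*w0) = d0 + x*u0 := by rw [← hd0]; ring
    have k1 : (a1 + (s₀ + x)*u1) - (b1 + t₀*w1) = d1 + x*u1 := by rw [← hd1]; ring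
    rw [k0, k1, hd0, hd1] at hm
    nlinarith [hm]
  have hA2 : d0*w0 + d1*w1 = 0 := by
    apply stat _ (w0^2 + w1^2) (min t₀ (1 - t₀)) (by positivity)
      (lt_min ht0 (by linarith))
    intro x hx
    obtain ⟨hxl, hxr⟩ := abs_le.mp hx
    have hl := min_le_left t₀ (1 - t₀)
    have hr := min_le_right t₀ (1 - t₀)
    have hm := hmin' s₀ (t₀ - x) hs00 hs01 (by linarith) (by linarith)
    rw [hF] at hm
    simp only [] at hm
    have k0 : (a0 + s₀*u0) - (b0 + (t₀ - x)*w0) = d0 + x*w0 := by rw [← hd0]; ring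
    have k1 : (a1 + s₀*u1) - (b1 + (t₀ - x)*w1) = d1 + x*w1 := by rw [← hd1]; ring
    rw [k0, k1, hd0, hd1] at hm
    nlinarith [hm]
  by_cases hD : d0 = 0 ∧ d1 = 0
  · -- crossing case
    obtain ⟨hD0, hD1⟩ := hD
    have pick : ∀ s₀' : ℝ, 0 ≤ s₀' → s₀' ≤ 1 → ∃ s : ℝ, (s = 0 ∨ s = 1) ∧ (s - s₀')^2 ≤ 1/4 := by
      intro s' h0 h1
      rcases le_total s' (1/2) with h | h
      · exact ⟨0, Or.inl rfl, by nlinarith⟩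
      · exact ⟨1, Or.inr rfl, by nlinarith⟩
    obtain ⟨s, hs, hsb⟩ := pick s₀ hs00 hs01
    obtain ⟨t, ht, htb⟩ := pick t₀ ht00 ht01
    refine ⟨s, t, hs, ht, ?_⟩
    have k0 : (a0 + s*u0) - (b0 + t*w0) = (s - s₀)*u0 - (t - t₀)*w0 := by
      linear_combination hd0.trans hD0
    have k1 : (a1 + s*u1) - (b1 + t*w1) = (s - s₀)*u1 - (t - t₀)*w1 := by
      linear_combination hd1.trans hD1
    rw [k0, k1]
    exact crossbd (s - s₀) (t - t₀) u0 u1 w0 w1 hsb htb hU hW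
  · -- parallel case
    have hN : 0 < d0^2 + d1^2 := by
      by_contra h
      push_neg at h
      exact hD ⟨by nlinarith [sq_nonneg d0, sq_nonneg d1],
        by nlinarith [sq_nonneg d0, sq_nonneg d1]⟩
    set α := (u1*d0 - u0*d1)/(d0^2 + d1^2) with hα
    set β := (w1*d0 - w0*d1)/(d0^2 + d1^2) with hβ
    have hu0' : u0 = -(α*d1) := by
      rw [hα]; field_simp; linear_combination d0*hA1
    have hu1' : u1 = α*d0 := by
      rw [hα]; field_simp; linear_combination d1*hA1
    have hw0' : w0 = -(β*d1) := by
      rw [hβ]; field_simp; linear_combination d0*hA2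
    have hw1' : w1 = β*d0 := by
      rw [hβ]; field_simp; linear_combination d1*hA2
    have hUα : (α*1 - α*0)^2 * (d0^2 + d1^2) ≤ 1 := by
      have e : u0^2 + u1^2 = α^2*(d0^2 + d1^2) := by rw [hu0', hu1']; ring
      rw [show (α*1 - α*0)^2 = α^2 by ring]; linarith [hU, e]
    have hWβ : (β*1 - β*0)^2 * (d0^2 + d1^2) ≤ 1 := by
      have e : w0^2 + w1^2 = β^2*(d0^2 + d1^2) := by rw [hw0', hw1']; ring
      rw [show (β*1 - β*0)^2 = β^2 by ring]; linarith [hW, e]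
    have hsgn1 : (-s₀*α)*((1-s₀)*α) ≤ 0 := by
      nlinarith [mul_nonneg (mul_nonneg hs0.le (by linarith : (0:ℝ) ≤ 1-s₀)) (sq_nonneg α)]
    have hsgn2 : (-t₀*β)*((1-t₀)*β) ≤ 0 := by
      nlinarith [mul_nonneg (mul_nonneg ht0.le (by linarith : (0:ℝ) ≤ 1-t₀)) (sq_nonneg β)]
    have hbx' : ((1-s₀)*α - (-s₀*α))^2 * (d0^2 + d1^2) ≤ 1 := by
      rw [show ((1-s₀)*α - (-s₀*α))^2 = (α*1 - α*0)^2 by ring]; exact hUα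
    have hby' : ((1-t₀)*β - (-t₀*β))^2 * (d0^2 + d1^2) ≤ 1 := by
      rw [show ((1-t₀)*β - (-t₀*β))^2 = (β*1 - β*0)^2 by ring]; exact hWβ
    obtain ⟨x', hx'm, y', hy'm, hfin⟩ := claim' (-s₀*α) ((1-s₀)*α) (-t₀*β) ((1-t₀)*β)
      (d0^2 + d1^2) hN hsgn1 hsgn2 hbx' hby'
    have final : ∀ s t : ℝ, (s - s₀)*α = x' → (t - t₀)*β = y' →
        ((a0 + s*u0) - (b0 + t*w0))^2 + ((a1 + s*u1) - (b1 + t*w1))^2 ≤ 1 := by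
      intro s t hxs hyt
      have k0 : (a0 + s*u0) - (b0 + t*w0) = d0 + (s - s₀)*u0 - (t - t₀)*w0 := by
        linear_combination hd0
      have k1 : (a1 + s*u1) - (b1 + t*w1) = d1 + (s - s₀)*u1 - (t - t₀)*w1 := by
        linear_combination hd1
      rw [k0, k1, hu0', hu1', hw0', hw1']
      have key : (d0 + (s - s₀)*(-(α*d1)) - (t - t₀)*(-(β*d1)))^2
          + (d1 + (s - s₀)*(α*d0) - (t - t₀)*(β*d0))^2
          = (d0^2 + d1^2) + (x' - y')^2 * (d0^2 + d1^2) := by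
        rw [← hxs, ← hyt]; ring
      rw [key]
      linarith [hfin, hN34]
    simp only [Set.mem_insert_iff, Set.mem_singleton_iff] at hx'm hy'm
    rcases hx'm with hx'm | hx'm <;> rcases hy'm with hy'm | hy'm
    · exact ⟨0, 0, Or.inl rfl, Or.inl rfl, final 0 0 (by rw [hx'm]; try ring) (by rw [hy'm]; try ring)⟩
    · exact ⟨0, 1, Or.inl rfl, Or.inr rfl, final 0 1 (by rw [hx'm]; try ring) (by rw [hy'm]; try ring)⟩
    · exact ⟨1, 0, Or.inr rfl, Or.inl rfl, final 1 0 (by rw [hx'm]; try ring) (by rw [hy'm]; try ring)⟩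
    · exact ⟨1, 1, Or.inr rfl, Or.inr rfl, final 1 1 (by rw [hx'm]; try ring) (by rw [hy'm]; try ring)⟩

private lemma lemA (p₁ q₁ p₂ q₂ x₁ x₂ : EuclideanSpace ℝ (Fin 2))
    (h1 : dist p₁ q₁ ≤ 1) (h2 : dist p₂ q₂ ≤ 1)
    (hx₁ : x₁ ∈ segment ℝ p₁ q₁) (hx₂ : x₂ ∈ segment ℝ p₂ q₂)
    (hd : dist x₁ x₂ ^ 2 ≤ 3/4) :
    ∃ e₁ ∈ ({p₁, q₁} : Set (EuclideanSpace ℝ (Fin 2))),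
      ∃ e₂ ∈ ({p₂, q₂} : Set (EuclideanSpace ℝ (Fin 2))), dist e₁ e₂ ≤ 1 := by
  rw [segment_eq_image'] at hx₁ hx₂
  obtain ⟨s₁, ⟨hs10, hs11⟩, rfl⟩ := hx₁
  obtain ⟨t₁, ⟨ht10, ht11⟩, rfl⟩ := hx₂
  have happ : ∀ (p q : EuclideanSpace ℝ (Fin 2)) (s : ℝ) (i : Fin 2),
      ((p + s • (q - p)) : EuclideanSpace ℝ (Fin 2)) i = p i + s * (q i - p i) := by
    intro p q s i
    simp [PiLp.add_apply, PiLp.smul_apply, PiLp.sub_apply, smul_eq_mul]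
  have h1' : (q₁ 0 - p₁ 0)^2 + (q₁ 1 - p₁ 1)^2 ≤ 1 := by
    have : dist p₁ q₁ ^ 2 ≤ 1 := by nlinarith [dist_nonneg (x := p₁) (y := q₁)]
    rw [distsq] at this; nlinarith [this]
  have h2' : (q₂ 0 - p₂ 0)^2 + (q₂ 1 - p₂ 1)^2 ≤ 1 := by
    have : dist p₂ q₂ ^ 2 ≤ 1 := by nlinarith [dist_nonneg (x := p₂) (y := q₂)]
    rw [distsq] at this; nlinarith [this]
  have hd' : ((p₁ 0 + s₁*(q₁ 0 - p₁ 0)) - (p₂ 0 + t₁*(q₂ 0 - p₂ 0)))^2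
      + ((p₁ 1 + s₁*(q₁ 1 - p₁ 1)) - (p₂ 1 + t₁*(q₂ 1 - p₂ 1)))^2 ≤ 3/4 := by
    have hdd := hd
    simp only [] at hdd
    rw [distsq, happ, happ, happ, happ] at hdd
    exact hdd
  obtain ⟨s, t, hs, ht, hbound⟩ := lemAcore (p₁ 0) (p₁ 1) (p₂ 0) (p₂ 1)
    (q₁ 0 - p₁ 0) (q₁ 1 - p₁ 1) (q₂ 0 - p₂ 0) (q₂ 1 - p₂ 1) s₁ t₁
    h1' h2' hs10 hs11 ht10 ht11 hd'
  have fin : ∀ e₁ e₂ : EuclideanSpace ℝ (Fin 2),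
      e₁ 0 = p₁ 0 + s*(q₁ 0 - p₁ 0) → e₁ 1 = p₁ 1 + s*(q₁ 1 - p₁ 1) →
      e₂ 0 = p₂ 0 + t*(q₂ 0 - p₂ 0) → e₂ 1 = p₂ 1 + t*(q₂ 1 - p₂ 1) →
      dist e₁ e₂ ≤ 1 := by
    intro e₁ e₂ k1 k2 k3 k4
    have : dist e₁ e₂ ^ 2 ≤ 1 := by
      rw [distsq, k1, k2, k3, k4]
      nlinarith [hbound]
    nlinarith [dist_nonneg (x := e₁) (y := e₂), this]
  rcases hs with rfl | rfl <;> rcases ht with rfl | rfl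
  · exact ⟨p₁, by simp, p₂, by simp, fin p₁ p₂ (by ring) (by ring) (by ring) (by ring)⟩
  · exact ⟨p₁, by simp, q₂, by simp, fin p₁ q₂ (by ring) (by ring) (by ring) (by ring)⟩
  · exact ⟨q₁, by simp, p₂, by simp, fin q₁ p₂ (by ring) (by ring) (by ring) (by ring)⟩
  · exact ⟨q₁, by simp, q₂, by simp, fin q₁ q₂ (by ring) (by ring) (by ring) (by ring)⟩

end



/-- The set `𝒞₁(g)` of vertices of triangles of the unit-disk graph on `V` containing `g`. -/
def triCand (V : Set (EuclideanSpace ℝ (Fin 2))) (g : EuclideanSpace ℝ (Fin 2)) :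
    Set (EuclideanSpace ℝ (Fin 2)) :=
  {v ∈ V | ∃ a ∈ V, ∃ b ∈ V, dist v a ≤ 1 ∧ dist a b ≤ 1 ∧ dist v b ≤ 1 ∧
    g ∈ convexHull ℝ ({v, a, b} : Set (EuclideanSpace ℝ (Fin 2)))}

/-- The set `𝒞₂(g)` of vertices incident to an edge of the unit-disk graph on `V`
intersecting the cell `C`. -/
def edgeCand (V C : Set (EuclideanSpace ℝ (Fin 2))) : Set (EuclideanSpace ℝ (Fin 2)) :=
  {v ∈ V | ∃ w ∈ V, dist v w ≤ 1 ∧ (segment ℝ v w ∩ C).Nonempty}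

/-- `r` is the representative of the cell `C` with center `g`. -/
def IsRep (V C : Set (EuclideanSpace ℝ (Fin 2))) (g r : EuclideanSpace ℝ (Fin 2)) : Prop :=
  (r ∈ triCand V g ∧ ∀ v ∈ triCand V g, dist g r ≤ dist g v) ∨
  (triCand V g = ∅ ∧ r ∈ edgeCand V C ∧ ∀ v ∈ edgeCand V C, dist g r ≤ dist g v)

/-- If `g₁` and `g₂` are centers of two horizontally or vertically adjacent
grid cells of side `c = √15/10` and `u, v ∈ V` are their representatives, then the hop-distance
from `u` to `v` in the unit-disk graph on `V` is at most 3. -/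
theorem stmt_9 (V : Set (EuclideanSpace ℝ (Fin 2))) (c : ℝ) (hc : c = Real.sqrt 15 / 10)
    (G : SimpleGraph V)
    (hG : ∀ a b : V, G.Adj a b ↔ a ≠ b ∧ dist (a : EuclideanSpace ℝ (Fin 2)) b ≤ 1)
    (g₁ g₂ : EuclideanSpace ℝ (Fin 2))
    (hadj : g₂ - g₁ = (WithLp.equiv 2 (Fin 2 → ℝ)).symm ![c, 0] ∨
            g₂ - g₁ = (WithLp.equiv 2 (Fin 2 → ℝ)).symm ![0, c])
    (C₁ C₂ : Set (EuclideanSpace ℝ (Fin 2)))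
    (hC₁ : C₁ = {x | ∀ i, |x i - g₁ i| ≤ c / 2})
    (hC₂ : C₂ = {x | ∀ i, |x i - g₂ i| ≤ c / 2})
    (u v : EuclideanSpace ℝ (Fin 2)) (hu : u ∈ V) (hv : v ∈ V)
    (hru : IsRep V C₁ g₁ u) (hrv : IsRep V C₂ g₂ v) :
    ∃ w : G.Walk ⟨u, hu⟩ ⟨v, hv⟩, w.length ≤ 3 := by

  classical
  have hc0 : 0 ≤ c := by rw [hc]; positivity
  have hc2 : c^2 = 3/20 := by
    rw [hc, div_pow, Real.sq_sqrt (by norm_num : (0:ℝ) ≤ 15)]; norm_num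
  subst hC₁ hC₂
  have hg : (g₂ 0 - g₁ 0 = c ∧ g₂ 1 - g₁ 1 = 0) ∨ (g₂ 0 - g₁ 0 = 0 ∧ g₂ 1 - g₁ 1 = c) := by
    rcases hadj with h | h
    · refine Or.inl ⟨?_, ?_⟩
      · have := congrArg (fun x : EuclideanSpace ℝ (Fin 2) => x 0) h
        simpa [PiLp.sub_apply] using this
      · have := congrArg (fun x : EuclideanSpace ℝ (Fin 2) => x 1) h
        simpa [PiLp.sub_apply] using this
    · refine Or.inr ⟨?_, ?_⟩
      · have := congrArg (fun x : EuclideanSpace ℝ (Fin 2) => x 0) h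
        simpa [PiLp.sub_apply] using this
      · have := congrArg (fun x : EuclideanSpace ℝ (Fin 2) => x 1) h
        simpa [PiLp.sub_apply] using this
  have step : ∀ (x y : V), dist (x : EuclideanSpace ℝ (Fin 2)) (y : EuclideanSpace ℝ (Fin 2)) ≤ 1 →
      ∃ w : G.Walk x y, w.length ≤ 1 := by
    intro x y hdist
    by_cases hxy : x = y
    · subst hxy; exact ⟨SimpleGraph.Walk.nil, by simp⟩
    · exact ⟨SimpleGraph.Walk.cons ((hG x y).mpr ⟨hxy, hdist⟩) SimpleGraph.Walk.nil, by simp⟩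
  have sqle : ∀ a b : EuclideanSpace ℝ (Fin 2), dist a b ^ 2 ≤ 1 → dist a b ≤ 1 := by
    intro a b h
    nlinarith [dist_nonneg (x := a) (y := b)]
  suffices h : ∃ (X Y : EuclideanSpace ℝ (Fin 2)) (hX : X ∈ V) (hY : Y ∈ V),
      dist u X ≤ 1 ∧ dist X Y ≤ 1 ∧ dist Y v ≤ 1 by
    obtain ⟨X, Y, hX, hY, h1, h2, h3⟩ := h
    obtain ⟨w₁, hw₁⟩ := step ⟨u, hu⟩ ⟨X, hX⟩ h1
    obtain ⟨w₂, hw₂⟩ := step ⟨X, hX⟩ ⟨Y, hY⟩ h2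
    obtain ⟨w₃, hw₃⟩ := step ⟨Y, hY⟩ ⟨v, hv⟩ h3
    refine ⟨w₁.append (w₂.append w₃), ?_⟩
    simp only [SimpleGraph.Walk.length_append]
    omega
  have hu' : u ∈ triCand V g₁ ∨ u ∈ edgeCand V {x | ∀ i, |x i - g₁ i| ≤ c / 2} := by
    rcases hru with h | h
    exacts [Or.inl h.1, Or.inr h.2.1]
  have hv' : v ∈ triCand V g₂ ∨ v ∈ edgeCand V {x | ∀ i, |x i - g₂ i| ≤ c / 2} := by
    rcases hrv with h | h
    exacts [Or.inl h.1, Or.inr h.2.1]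
  clear hru hrv
  rcases hu' with hut | hue <;> rcases hv' with hvt | hve
  · -- triangle / triangle
    obtain ⟨-, a₁, ha₁, b₁, hb₁, d1a, d1b, d1c, hcx1⟩ := hut
    obtain ⟨-, a₂, ha₂, b₂, hb₂, d2a, d2b, d2c, hcx2⟩ := hvt
    have hgg : dist g₁ g₂ ^ 2 ≤ 3/20 := by
      rw [distsq]
      rcases hg with ⟨e0, e1⟩ | ⟨e0, e1⟩ <;> nlinarith [hc2]
    obtain ⟨e₂, he₂m, he₂⟩ := lemT v a₂ b₂ g₁ g₂ d2a d2c d2b hcx2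
    obtain ⟨e₁, he₁m, he₁⟩ := lemT u a₁ b₁ e₂ g₁ d1a d1c d1b hcx1
    simp only [Set.mem_insert_iff, Set.mem_singleton_iff] at he₁m he₂m
    have hcg : dist e₂ g₁ = dist g₁ e₂ := dist_comm _ _
    refine ⟨e₁, e₂, ?_, ?_, ?_, ?_, ?_⟩
    · rcases he₁m with rfl | rfl | rfl
      exacts [hu, ha₁, hb₁]
    · rcases he₂m with rfl | rfl | rfl
      exacts [hv, ha₂, hb₂]
    · rcases he₁m with rfl | rfl | rfl
      · simp
      · exact d1a
      · exact d1c
    · rw [dist_comm]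
      apply sqle
      rw [hcg] at he₁
      nlinarith [he₁, he₂, hgg]
    · rw [dist_comm]
      rcases he₂m with rfl | rfl | rfl
      · simp
      · exact d2a
      · exact d2c
  · -- triangle / edge
    obtain ⟨-, a₁, ha₁, b₁, hb₁, d1a, d1b, d1c, hcx1⟩ := hut
    obtain ⟨-, w₂, hw₂V, hvw₂, x₂, hx₂seg, hx₂C⟩ := hve
    have hb20 := abs_le.mp (hx₂C 0)
    have hb21 := abs_le.mp (hx₂C 1)
    have hgx : dist g₁ x₂ ^ 2 ≤ 3/8 := by
      rw [distsq]
      rcases hg with ⟨e0, e1⟩ | ⟨e0, e1⟩ <;>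
        nlinarith [hc2, hc0,
          mul_nonneg (by linarith : (0:ℝ) ≤ 3*c/2 - (g₁ 0 - x₂ 0))
            (by linarith : (0:ℝ) ≤ 3*c/2 + (g₁ 0 - x₂ 0)),
          mul_nonneg (by linarith : (0:ℝ) ≤ 3*c/2 - (g₁ 1 - x₂ 1))
            (by linarith : (0:ℝ) ≤ 3*c/2 + (g₁ 1 - x₂ 1))]
    have hvw₂' : dist v w₂ ^ 2 ≤ 1 := by nlinarith [dist_nonneg (x := v) (y := w₂)]
    obtain ⟨e₂, he₂m, he₂⟩ := lemB g₁ v w₂ x₂ hx₂seg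
    obtain ⟨e₁, he₁m, he₁⟩ := lemT u a₁ b₁ e₂ g₁ d1a d1c d1b hcx1
    simp only [Set.mem_insert_iff, Set.mem_singleton_iff] at he₁m he₂m
    refine ⟨e₁, e₂, ?_, ?_, ?_, ?_, ?_⟩
    · rcases he₁m with rfl | rfl | rfl
      exacts [hu, ha₁, hb₁]
    · rcases he₂m with rfl | rfl
      exacts [hv, hw₂V]
    · rcases he₁m with rfl | rfl | rfl
      · simp
      · exact d1a
      · exact d1c
    · rw [dist_comm]
      apply sqle
      rw [dist_comm e₂ g₁] at he₁
      nlinarith [he₁, he₂, hgx, hvw₂']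
    · rw [dist_comm]
      rcases he₂m with rfl | rfl
      · simp
      · exact hvw₂
  · -- edge / triangle
    obtain ⟨-, w₁, hw₁V, huw₁, x₁, hx₁seg, hx₁C⟩ := hue
    obtain ⟨-, a₂, ha₂, b₂, hb₂, d2a, d2b, d2c, hcx2⟩ := hvt
    have hb10 := abs_le.mp (hx₁C 0)
    have hb11 := abs_le.mp (hx₁C 1)
    have hgx : dist g₂ x₁ ^ 2 ≤ 3/8 := by
      rw [distsq]
      rcases hg with ⟨e0, e1⟩ | ⟨e0, e1⟩ <;>
        nlinarith [hc2, hc0,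
          mul_nonneg (by linarith : (0:ℝ) ≤ 3*c/2 - (g₂ 0 - x₁ 0))
            (by linarith : (0:ℝ) ≤ 3*c/2 + (g₂ 0 - x₁ 0)),
          mul_nonneg (by linarith : (0:ℝ) ≤ 3*c/2 - (g₂ 1 - x₁ 1))
            (by linarith : (0:ℝ) ≤ 3*c/2 + (g₂ 1 - x₁ 1))]
    have huw₁' : dist u w₁ ^ 2 ≤ 1 := by nlinarith [dist_nonneg (x := u) (y := w₁)]
    obtain ⟨e₁, he₁m, he₁⟩ := lemB g₂ u w₁ x₁ hx₁seg
    obtain ⟨e₂, he₂m, he₂⟩ := lemT v a₂ b₂ e₁ g₂ d2a d2c d2b hcx2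
    simp only [Set.mem_insert_iff, Set.mem_singleton_iff] at he₁m he₂m
    refine ⟨e₁, e₂, ?_, ?_, ?_, ?_, ?_⟩
    · rcases he₁m with rfl | rfl
      exacts [hu, hw₁V]
    · rcases he₂m with rfl | rfl | rfl
      exacts [hv, ha₂, hb₂]
    · rcases he₁m with rfl | rfl
      · simp
      · exact huw₁
    · apply sqle
      rw [dist_comm e₁ g₂] at he₂
      nlinarith [he₁, he₂, hgx, huw₁']
    · rw [dist_comm]
      rcases he₂m with rfl | rfl | rfl
      · simp
      · exact d2a
      · exact d2c
  · -- edge / edge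
    obtain ⟨-, w₁, hw₁V, huw₁, x₁, hx₁seg, hx₁C⟩ := hue
    obtain ⟨-, w₂, hw₂V, hvw₂, x₂, hx₂seg, hx₂C⟩ := hve
    have hb10 := abs_le.mp (hx₁C 0)
    have hb11 := abs_le.mp (hx₁C 1)
    have hb20 := abs_le.mp (hx₂C 0)
    have hb21 := abs_le.mp (hx₂C 1)
    have hdx : dist x₁ x₂ ^ 2 ≤ 3/4 := by
      rw [distsq]
      rcases hg with ⟨e0, e1⟩ | ⟨e0, e1⟩ <;>
        nlinarith [hc2, hc0,
          mul_nonneg (by linarith : (0:ℝ) ≤ 2*c - (x₁ 0 - x₂ 0))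
            (by linarith : (0:ℝ) ≤ 2*c + (x₁ 0 - x₂ 0)),
          mul_nonneg (by linarith : (0:ℝ) ≤ 2*c - (x₁ 1 - x₂ 1))
            (by linarith : (0:ℝ) ≤ 2*c + (x₁ 1 - x₂ 1))]
    obtain ⟨e₁, he₁m, e₂, he₂m, hee⟩ := lemA u w₁ v w₂ x₁ x₂ huw₁ hvw₂ hx₁seg hx₂seg hdx
    simp only [Set.mem_insert_iff, Set.mem_singleton_iff] at he₁m he₂m
    refine ⟨e₁, e₂, ?_, ?_, ?_, hee, ?_⟩
    · rcases he₁m with rfl | rfl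
      exacts [hu, hw₁V]
    · rcases he₂m with rfl | rfl
      exacts [hv, hw₂V]
    · rcases he₁m with rfl | rfl
      · simp
      · exact huw₁
    · rw [dist_comm]
      rcases he₂m with rfl | rfl
      · simp
      · exact hvw₂
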